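/- With |α_τ| := min_{0<μ<N} |α_μ| and α_(c) := (Σ_{μ=1}^{N−1} |α_μ|^{−1})^{−1}, for each α_0 ∈ (α_(c), |α_τ|) let Ψ(α_0) denote the unique solution in (0, π) of Ψ = Σ_{μ=1}^{N−1} arcsin((α_0/|α_μ|) sin Ψ). Then the function α_0 ↦ Ψ(α_0) is real-analytic on the open interval (α_(c), |α_τ|). -/

import Mathlib

open Real Finset

lemma analyticAt_rsin (x : ℝ) : AnalyticAt ℝ Real.sin x := by
  have hc : AnalyticAt ℂ Complex.sin (x : ℂ) := by
    have h1 : AnalyticAt ℂ (fun z : ℂ => Complex.exp (-z * Complex.I)) (x : ℂ) :=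
      ((analyticAt_id.neg.mul analyticAt_const)).cexp
    have h2 : AnalyticAt ℂ (fun z : ℂ => Complex.exp (z * Complex.I)) (x : ℂ) :=
      ((analyticAt_id.mul analyticAt_const)).cexp
    have h3 : AnalyticAt ℂ (fun z : ℂ =>
        (Complex.exp (-z * Complex.I) - Complex.exp (z * Complex.I)) * Complex.I / 2) (x : ℂ) :=
      ((h1.sub h2).mul analyticAt_const).div analyticAt_const (by norm_num)
    exact h3
  have hre : AnalyticAt ℝ (fun z : ℂ => Complex.sin z) (x : ℂ) := hc.restrictScalars
  have : AnalyticAt ℝ (fun t : ℝ => (Complex.sin (Complex.ofRealCLM t)).re) x :=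
    (Complex.reCLM.analyticAt _).comp (hre.comp (Complex.ofRealCLM.analyticAt x))
  exact this

lemma analyticAt_arcsin {x : ℝ} (h1 : -1 < x) (h2 : x < 1) : AnalyticAt ℝ Real.arcsin x := by
  set y := Real.arcsin x with hy
  have hy1 : -(π/2) < y := Real.neg_pi_div_two_lt_arcsin.2 h1
  have hy2 : y < π/2 := Real.arcsin_lt_pi_div_two.2 h2
  have hcos : 0 < Real.cos y := Real.cos_pos_of_mem_Ioo ⟨by linarith, hy2⟩
  obtain ⟨p, hp⟩ := analyticAt_rsin y
  set i : ℝ ≃L[ℝ] ℝ := ContinuousLinearEquiv.unitsEquivAut ℝ (Units.mk0 _ hcos.ne')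
  have hderiv : HasFDerivAt Real.sin ((1 : ℝ →L[ℝ] ℝ).smulRight (Real.cos y)) y :=
    (Real.hasDerivAt_sin y).hasFDerivAt
  have hp1 : p 1 = (continuousMultilinearCurryFin1 ℝ ℝ ℝ).symm (i : ℝ →L[ℝ] ℝ) := by
    have := hp.hasFDerivAt.unique hderiv
    apply (continuousMultilinearCurryFin1 ℝ ℝ ℝ).injective
    rw [this]
    ext t
    simp [i, ContinuousLinearEquiv.unitsEquivAut, mul_comm]
  have hsrc : y ∈ Real.sinPartialHomeomorph.source := by
    simp only [Real.sinPartialHomeomorph]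
    exact ⟨hy1, hy2⟩
  have hp' : HasFPowerSeriesAt (Real.sinPartialHomeomorph : ℝ → ℝ) p y := hp
  have := Real.sinPartialHomeomorph.hasFPowerSeriesAt_symm hsrc hp' hp1
  have hcoe : (Real.sinPartialHomeomorph.symm : ℝ → ℝ) = Real.arcsin := rfl
  rw [hcoe] at this
  have hxy : Real.sinPartialHomeomorph y = x := by
    simp only [Real.sinPartialHomeomorph]
    exact Real.sin_arcsin h1.le h2.le
  rw [hxy] at this
  exact this.analyticAt

lemma cot_strictAnti : StrictAntiOn (fun t : ℝ => t * Real.cos t / Real.sin t)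
    (Set.Ioo 0 (π/2)) := by
  have hderiv : ∀ t ∈ Set.Ioo (0:ℝ) (π/2),
      HasDerivAt (fun t : ℝ => t * Real.cos t / Real.sin t)
        ((Real.cos t * Real.sin t - t) / Real.sin t ^ 2) t := by
    intro t ht
    have hst : 0 < Real.sin t := Real.sin_pos_of_pos_of_lt_pi ht.1 (by linarith [pi_pos, ht.2])
    have h1 : HasDerivAt (fun t : ℝ => t * Real.cos t)
        (Real.cos t + t * (-Real.sin t)) t := by
      simpa using (hasDerivAt_id t).fun_mul (Real.hasDerivAt_cos t)
    have h2 := h1.fun_div (Real.hasDerivAt_sin t) hst.ne'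
    convert h2 using 1
    · rfl
    · rfl
    have := Real.sin_sq_add_cos_sq t
    congr 1
    linear_combination t * this
  apply StrictAntiOn.mono (s := Set.Ioo (0:ℝ) (π/2)) ?_ (le_refl _)
  have hconv : Convex ℝ (Set.Ioo (0:ℝ) (π/2)) := convex_Ioo _ _
  apply strictAntiOn_of_hasDerivWithinAt_neg hconv
  · intro t ht
    exact ((hderiv t (by simpa using ht)).continuousAt).continuousWithinAt
  · intro t ht
    rw [interior_Ioo] at ht
    exact (hderiv t ht).hasDerivWithinAt
  · intro t ht
    rw [interior_Ioo] at ht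
    have hst : 0 < Real.sin t := Real.sin_pos_of_pos_of_lt_pi ht.1 (by linarith [pi_pos, ht.2])
    apply div_neg_of_neg_of_pos _ (by positivity)
    have h1 : Real.sin t < t := Real.sin_lt ht.1
    nlinarith [Real.cos_le_one t, hst]

lemma key_ineq {c Ψ : ℝ} (hc0 : 0 < c) (hc1 : c < 1) (hΨ0 : 0 < Ψ) (hΨπ : Ψ < π) :
    c * Real.cos Ψ / Real.sqrt (1 - (c * Real.sin Ψ)^2) < Real.arcsin (c * Real.sin Ψ) / Ψ := by
  have hsin : 0 < Real.sin Ψ := Real.sin_pos_of_pos_of_lt_pi hΨ0 hΨπ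
  have hsin1 : Real.sin Ψ ≤ 1 := Real.sin_le_one Ψ
  have hx0 : 0 < c * Real.sin Ψ := by positivity
  have hx1 : c * Real.sin Ψ < 1 := by nlinarith
  have harc : 0 < Real.arcsin (c * Real.sin Ψ) := Real.arcsin_pos.2 hx0
  rcases le_or_gt (Real.cos Ψ) 0 with hcos | hcos
  · have hL : c * Real.cos Ψ / Real.sqrt (1 - (c * Real.sin Ψ)^2) ≤ 0 :=
      div_nonpos_of_nonpos_of_nonneg (by nlinarith) (Real.sqrt_nonneg _)
    exact hL.trans_lt (by positivity)
  · have hΨlt : Ψ < π/2 := by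
      by_contra h
      push_neg at h
      have := Real.cos_nonpos_of_pi_div_two_le_of_le h (by linarith [pi_pos])
      linarith
    set u := Real.arcsin (c * Real.sin Ψ) with hu
    have hsinu : Real.sin u = c * Real.sin Ψ := Real.sin_arcsin (by linarith) hx1.le
    have hcosu : Real.cos u = Real.sqrt (1 - (c * Real.sin Ψ)^2) := by
      rw [hu, Real.cos_arcsin]
    have hu2 : u < π/2 := Real.arcsin_lt_pi_div_two.2 hx1
    have hcosu0 : 0 < Real.cos u := Real.cos_pos_of_mem_Ioo ⟨by linarith, hu2⟩
    have huΨ : u < Ψ := by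
      have h1 : Real.sin u < Real.sin Ψ := by nlinarith
      by_contra h
      push_neg at h
      have := Real.sin_le_sin_of_le_of_le_pi_div_two (by linarith : -(π/2) ≤ Ψ) hu2.le h
      linarith
    have hmem1 : u ∈ Set.Ioo (0:ℝ) (π/2) := ⟨harc, hu2⟩
    have hmem2 : Ψ ∈ Set.Ioo (0:ℝ) (π/2) := ⟨hΨ0, hΨlt⟩
    have hanti := cot_strictAnti hmem1 hmem2 huΨ
    rw [div_lt_div_iff₀ hsin (by nlinarith : (0:ℝ) < Real.sin u)] at hanti
    rw [← hcosu, div_lt_div_iff₀ (by positivity) hΨ0]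
    have hanti' : Ψ * Real.cos Ψ * (c * Real.sin Ψ) < u * Real.cos u * Real.sin Ψ := by
      rwa [hsinu] at hanti
    have h2 : (c * Real.cos Ψ * Ψ) * Real.sin Ψ < (u * Real.cos u) * Real.sin Ψ := by
      ring_nf at hanti' ⊢
      linarith
    exact lt_of_mul_lt_mul_right h2 hsin.le

/-- The function `α₀ ↦ Ψ(α₀)`, where `Ψ(α₀)` is the unique solution in `(0, π)` of
`Ψ = Σ_{μ=1}^{N−1} arcsin((α₀/|α_μ|) sin Ψ)`, is real-analytic on the open
interval `(α_(c), |α_τ|)`. -/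
theorem fixed_point_analytic_in_alpha0 (N : ℕ) (hN : 2 < N)
    (α : ℕ → ℝ) (hαμ : ∀ μ ∈ Finset.Ico 1 N, α μ < 0)
    (τ : ℕ) (hτ : τ ∈ Finset.Ico 1 N)
    (hτmin : ∀ μ ∈ Finset.Ico 1 N, |α τ| ≤ |α μ|)
    (Ψfun : ℝ → ℝ)
    (hΨ : ∀ a ∈ Set.Ioo ((∑ μ ∈ Finset.Ico 1 N, |α μ|⁻¹)⁻¹) |α τ|,
      Ψfun a ∈ Set.Ioo (0 : ℝ) π ∧
      Ψfun a = ∑ μ ∈ Finset.Ico 1 N, Real.arcsin ((a / |α μ|) * Real.sin (Ψfun a)))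
    (huniq : ∀ a ∈ Set.Ioo ((∑ μ ∈ Finset.Ico 1 N, |α μ|⁻¹)⁻¹) |α τ|,
      ∀ y ∈ Set.Ioo (0 : ℝ) π,
        y = ∑ μ ∈ Finset.Ico 1 N, Real.arcsin ((a / |α μ|) * Real.sin y) → y = Ψfun a) :
    AnalyticOnNhd ℝ Ψfun (Set.Ioo ((∑ μ ∈ Finset.Ico 1 N, |α μ|⁻¹)⁻¹) |α τ|) := by
  intro a₀ ha₀
  set S := Set.Ioo ((∑ μ ∈ Finset.Ico 1 N, |α μ|⁻¹)⁻¹) |α τ| with hS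
  have hne : (Finset.Ico 1 N).Nonempty := ⟨1, by simp; omega⟩
  have hαpos : ∀ μ ∈ Finset.Ico 1 N, 0 < |α μ| := fun μ hμ => abs_pos.2 (hαμ μ hμ).ne
  have hαc_pos : 0 < (∑ μ ∈ Finset.Ico 1 N, |α μ|⁻¹)⁻¹ :=
    inv_pos.2 (Finset.sum_pos (fun μ hμ => inv_pos.2 (hαpos μ hμ)) hne)
  have ha0pos : 0 < a₀ := hαc_pos.trans ha₀.1
  have ha0lt : ∀ μ ∈ Finset.Ico 1 N, a₀ < |α μ| := fun μ hμ => ha₀.2.trans_le (hτmin μ hμ)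
  set Ψ₀ := Ψfun a₀ with hΨ₀def
  obtain ⟨hΨ₀mem, heq⟩ := hΨ a₀ ha₀
  have hsinΨ : 0 < Real.sin Ψ₀ := Real.sin_pos_of_pos_of_lt_pi hΨ₀mem.1 hΨ₀mem.2
  have hsin1 : Real.sin Ψ₀ ≤ 1 := Real.sin_le_one Ψ₀
  -- bounds on x μ
  have hc01 : ∀ μ ∈ Finset.Ico 1 N, 0 < a₀ / |α μ| ∧ a₀ / |α μ| < 1 := fun μ hμ =>
    ⟨div_pos ha0pos (hαpos μ hμ), (div_lt_one (hαpos μ hμ)).2 (ha0lt μ hμ)⟩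
  have hxlt : ∀ μ ∈ Finset.Ico 1 N, -1 < a₀ / |α μ| * Real.sin Ψ₀ ∧
      a₀ / |α μ| * Real.sin Ψ₀ < 1 := by
    intro μ hμ
    obtain ⟨h1, h2⟩ := hc01 μ hμ
    constructor
    · nlinarith
    · nlinarith
  -- the map H and its derivative data
  set F : ℝ × ℝ → ℝ := fun p =>
    p.2 - ∑ μ ∈ Finset.Ico 1 N, Real.arcsin (p.1 / |α μ| * Real.sin p.2) with hF
  set H : ℝ × ℝ → ℝ × ℝ := fun p => (p.1, F p) with hHdef
  set p₀ : ℝ × ℝ := (a₀, Ψ₀) with hp₀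
  have hFp₀ : F p₀ = 0 := by
    simp only [hF, hp₀]
    rw [sub_eq_zero]
    exact heq
  -- Analyticity of H at p₀
  have hHana : AnalyticAt ℝ H p₀ := by
    apply AnalyticAt.prod analyticAt_fst
    apply AnalyticAt.sub analyticAt_snd
    apply Finset.analyticAt_fun_sum
    intro μ hμ
    have hsnd : AnalyticAt ℝ (fun p : ℝ × ℝ => p.2) p₀ := analyticAt_snd
    have hsin2 : AnalyticAt ℝ (fun p : ℝ × ℝ => Real.sin p.2) p₀ :=
      (analyticAt_rsin Ψ₀).comp_of_eq hsnd rfl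
    have hg : AnalyticAt ℝ (fun p : ℝ × ℝ => p.1 / |α μ| * Real.sin p.2) p₀ :=
      ((analyticAt_fst.div analyticAt_const (hαpos μ hμ).ne')).mul hsin2
    exact (analyticAt_arcsin (hxlt μ hμ).1 (hxlt μ hμ).2).comp_of_eq hg rfl
  -- explicit derivative
  set d : ℕ → ℝ := fun μ => 1 / Real.sqrt (1 - (a₀ / |α μ| * Real.sin Ψ₀)^2) with hd
  set fstL : ℝ × ℝ →L[ℝ] ℝ := ContinuousLinearMap.fst ℝ ℝ ℝ with hfstL
  set sndL : ℝ × ℝ →L[ℝ] ℝ := ContinuousLinearMap.snd ℝ ℝ ℝ with hsndL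
  set D : ℕ → ℝ × ℝ →L[ℝ] ℝ := fun μ =>
    d μ • ((a₀ / |α μ|) • (Real.cos Ψ₀ • sndL) + Real.sin Ψ₀ • (|α μ|⁻¹ • fstL)) with hD
  have hFderiv : HasFDerivAt F (sndL - ∑ μ ∈ Finset.Ico 1 N, D μ) p₀ := by
    apply HasFDerivAt.sub (hasFDerivAt_snd)
    apply HasFDerivAt.fun_sum
    intro μ hμ
    have h1 : HasFDerivAt (fun p : ℝ × ℝ => p.1 / |α μ|) (|α μ|⁻¹ • fstL) p₀ := by
      simpa [div_eq_mul_inv] using (hasFDerivAt_fst (p := p₀)).mul_const (|α μ|⁻¹)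
    have h2 : HasFDerivAt (fun p : ℝ × ℝ => Real.sin p.2) (Real.cos Ψ₀ • sndL) p₀ :=
      (Real.hasDerivAt_sin Ψ₀).comp_hasFDerivAt (f := Prod.snd) p₀ (hasFDerivAt_snd (p := p₀))
    have hmul := h1.mul h2
    have harc := (Real.hasDerivAt_arcsin (hxlt μ hμ).1.ne' (hxlt μ hμ).2.ne).comp_hasFDerivAt
      p₀ hmul
    exact harc
  set b : ℝ := ∑ μ ∈ Finset.Ico 1 N, d μ * (Real.sin Ψ₀ * |α μ|⁻¹) with hb
  set cc : ℝ := 1 - ∑ μ ∈ Finset.Ico 1 N, d μ * (a₀ / |α μ| * Real.cos Ψ₀) with hcc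
  have hccpos : 0 < cc := by
    rw [hcc, sub_pos]
    have hlt : ∑ μ ∈ Finset.Ico 1 N, d μ * (a₀ / |α μ| * Real.cos Ψ₀) <
        ∑ μ ∈ Finset.Ico 1 N, Real.arcsin (a₀ / |α μ| * Real.sin Ψ₀) / Ψ₀ := by
      apply Finset.sum_lt_sum_of_nonempty hne
      intro μ hμ
      have hk := key_ineq (hc01 μ hμ).1 (hc01 μ hμ).2 hΨ₀mem.1 hΨ₀mem.2
      calc d μ * (a₀ / |α μ| * Real.cos Ψ₀)
          = a₀ / |α μ| * Real.cos Ψ₀ / Real.sqrt (1 - (a₀ / |α μ| * Real.sin Ψ₀)^2) := by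
            rw [hd]; ring
        _ < Real.arcsin (a₀ / |α μ| * Real.sin Ψ₀) / Ψ₀ := hk
    have hsum : ∑ μ ∈ Finset.Ico 1 N, Real.arcsin (a₀ / |α μ| * Real.sin Ψ₀) / Ψ₀ = 1 := by
      rw [← Finset.sum_div, ← heq]
      exact div_self hΨ₀mem.1.ne'
    linarith
  -- invertible derivative as a continuous linear equiv
  set Lf : ℝ × ℝ →L[ℝ] ℝ × ℝ := fstL.prod ((-b) • fstL + cc • sndL) with hLf
  set Lg : ℝ × ℝ →L[ℝ] ℝ × ℝ := fstL.prod ((b / cc) • fstL + cc⁻¹ • sndL) with hLg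
  have hleft : Function.LeftInverse Lg Lf := by
    intro p
    have := hccpos.ne'
    simp only [hLf, hLg, ContinuousLinearMap.prod_apply, ContinuousLinearMap.add_apply,
      ContinuousLinearMap.coe_smul', Pi.smul_apply, ContinuousLinearMap.coe_fst',
      ContinuousLinearMap.coe_snd', ContinuousLinearMap.neg_apply, smul_eq_mul,
      hfstL, hsndL]
    ext
    · rfl
    · show b / cc * p.1 + cc⁻¹ * (-b * p.1 + cc * p.2) = p.2
      field_simp
      ring
  have hright : Function.RightInverse Lg Lf := by
    intro p
    have := hccpos.ne'
    simp only [hLf, hLg, ContinuousLinearMap.prod_apply, ContinuousLinearMap.add_apply,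
      ContinuousLinearMap.coe_smul', Pi.smul_apply, ContinuousLinearMap.coe_fst',
      ContinuousLinearMap.coe_snd', ContinuousLinearMap.neg_apply, smul_eq_mul,
      hfstL, hsndL]
    ext
    · rfl
    · show -b * p.1 + cc * (b / cc * p.1 + cc⁻¹ * p.2) = p.2
      field_simp
      ring
  set iL : (ℝ × ℝ) ≃L[ℝ] (ℝ × ℝ) := ContinuousLinearEquiv.equivOfInverse Lf Lg hleft hright
    with hiL
  have hiLcoe : (iL : ℝ × ℝ →L[ℝ] ℝ × ℝ) = Lf := rfl
  -- the concrete derivative equals Lf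
  have hDeq : fstL.prod (sndL - ∑ μ ∈ Finset.Ico 1 N, D μ) = Lf := by
    rw [hLf]
    congr 1
    refine ContinuousLinearMap.ext fun p => ?_
    have hsumapp : (∑ μ ∈ Finset.Ico 1 N, D μ) p
        = (∑ μ ∈ Finset.Ico 1 N, d μ * (Real.sin Ψ₀ * |α μ|⁻¹)) * p.1
          + (∑ μ ∈ Finset.Ico 1 N, d μ * (a₀ / |α μ| * Real.cos Ψ₀)) * p.2 := by
      rw [ContinuousLinearMap.sum_apply, Finset.sum_mul, Finset.sum_mul,
        ← Finset.sum_add_distrib]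
      apply Finset.sum_congr rfl
      intro μ hμ
      simp only [hD, ContinuousLinearMap.coe_smul', Pi.smul_apply,
        ContinuousLinearMap.add_apply, ContinuousLinearMap.coe_fst',
        ContinuousLinearMap.coe_snd', smul_eq_mul, hfstL, hsndL]
      ring
    simp only [ContinuousLinearMap.sub_apply, hsumapp, ContinuousLinearMap.add_apply,
      ContinuousLinearMap.coe_smul', Pi.smul_apply, ContinuousLinearMap.coe_fst',
      ContinuousLinearMap.coe_snd', ContinuousLinearMap.neg_apply, smul_eq_mul,
      hfstL, hsndL, hb, hcc]
    ring
  have hHderiv : HasFDerivAt H Lf p₀ := by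
    rw [← hDeq]
    exact (hasFDerivAt_fst).prodMk hFderiv
  -- strict derivative
  obtain ⟨q, hq⟩ := hHana
  have hstrict : HasStrictFDerivAt H (iL : ℝ × ℝ →L[ℝ] ℝ × ℝ) p₀ := by
    have h1 := hq.hasStrictFDerivAt
    have h2 : continuousMultilinearCurryFin1 ℝ (ℝ × ℝ) (ℝ × ℝ) (q 1) = Lf :=
      hq.hasFDerivAt.unique hHderiv
    rw [h2, ← hiLcoe] at h1
    exact h1
  set homeo := hstrict.toOpenPartialHomeomorph H with hhomeo
  have hq1 : q 1 = (continuousMultilinearCurryFin1 ℝ (ℝ × ℝ) (ℝ × ℝ)).symm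
      (iL : ℝ × ℝ →L[ℝ] ℝ × ℝ) := by
    apply (continuousMultilinearCurryFin1 ℝ (ℝ × ℝ) (ℝ × ℝ)).injective
    rw [hq.hasFDerivAt.unique hHderiv, ← hiLcoe]
    exact ((continuousMultilinearCurryFin1 ℝ (ℝ × ℝ) (ℝ × ℝ)).apply_symm_apply _).symm
  have hsrc : p₀ ∈ homeo.source := hstrict.mem_toOpenPartialHomeomorph_source
  have hcoeH : (homeo : ℝ × ℝ → ℝ × ℝ) = H := hstrict.toOpenPartialHomeomorph_coe
  have hq' : HasFPowerSeriesAt (homeo : ℝ × ℝ → ℝ × ℝ) q p₀ := by rw [hcoeH]; exact hq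
  have hsymm := homeo.hasFPowerSeriesAt_symm hsrc hq' hq1
  have hHp₀ : homeo p₀ = (a₀, (0:ℝ)) := by
    rw [show homeo p₀ = H p₀ from congrFun hcoeH p₀]
    simp only [hHdef, hFp₀, hp₀]
    exact congrArg (Prod.mk a₀) hFp₀
  rw [hHp₀] at hsymm
  have hsymm_ana : AnalyticAt ℝ (homeo.symm : ℝ × ℝ → ℝ × ℝ) (a₀, (0:ℝ)) := hsymm.analyticAt
  -- the local solution function
  set φ : ℝ → ℝ := fun a => (homeo.symm (a, 0)).2 with hφdef
  have hembed : AnalyticAt ℝ (fun a : ℝ => ((a, (0:ℝ)) : ℝ × ℝ)) a₀ :=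
    analyticAt_id.prod analyticAt_const
  have hφana : AnalyticAt ℝ φ a₀ :=
    analyticAt_snd.comp_of_eq (hsymm_ana.comp_of_eq hembed rfl) rfl
  have hsymm_p₀ : homeo.symm (a₀, 0) = p₀ := by
    rw [← hHp₀]
    exact homeo.left_inv hsrc
  have hφa₀ : φ a₀ = Ψ₀ := by rw [hφdef]; simp only [hsymm_p₀, hp₀]
  -- eventual equality with Ψfun
  have htgt : (a₀, (0:ℝ)) ∈ homeo.target := by
    rw [← hHp₀]
    exact homeo.map_source hsrc
  have e1 : ∀ᶠ a in nhds a₀, a ∈ S := isOpen_Ioo.mem_nhds ha₀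
  have e2 : ∀ᶠ a in nhds a₀, ((a, (0:ℝ)) : ℝ × ℝ) ∈ homeo.target := by
    have hcont : ContinuousAt (fun a : ℝ => ((a, (0:ℝ)) : ℝ × ℝ)) a₀ :=
      (continuous_id.prodMk continuous_const).continuousAt
    exact hcont.preimage_mem_nhds (homeo.open_target.mem_nhds htgt)
  have e3 : ∀ᶠ a in nhds a₀, φ a ∈ Set.Ioo (0:ℝ) π := by
    have hcont : ContinuousAt φ a₀ := hφana.continuousAt
    have : Set.Ioo (0:ℝ) π ∈ nhds (φ a₀) := by
      rw [hφa₀]; exact isOpen_Ioo.mem_nhds hΨ₀mem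
    exact hcont.preimage_mem_nhds this
  have heqev : Ψfun =ᶠ[nhds a₀] φ := by
    filter_upwards [e1, e2, e3] with a h1 h2 h3
    set w := homeo.symm (a, 0) with hw
    have hHw : H w = (a, 0) := by
      rw [← congrFun hcoeH w]
      exact homeo.right_inv h2
    have hw1 : w.1 = a := congrArg Prod.fst hHw
    have hw2 : F w = 0 := congrArg Prod.snd hHw
    have hweq : w.2 = ∑ μ ∈ Finset.Ico 1 N, Real.arcsin ((a / |α μ|) * Real.sin w.2) := by
      rw [hF] at hw2
      rw [← hw1]
      linarith [hw2]
    have := huniq a h1 w.2 h3 hweq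
    rw [← this]
  exact hφana.congr heqev.symm
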